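/- arXiv:1607.03004 — 3 statements merged into one kernel-verified Lean document; each statement's English description precedes it below -/
import Mathlib

section
/- For every real number β with 0 < β < 1, all ε₁, ε₂ with 0 < ε₁ ≤ ε₂, and every u ≥ 0, one has χ(u, ε₂²) ≤ χ(u, ε₁²) ≤ u^β, where χ(u, ε²) := β ∫₀^u ((r + ε²)^β − ε^{2β})/r dr. That is, the family ε ↦ χ(·, ε²) is monotone nondecreasing as ε decreases. -/
open MeasureTheory Set

/-- The smoothing function `χ(u, ε²) := β ∫₀ᵘ ((r + ε²)^β − ε^{2β})/r dr`
used to approximate `u ↦ u^β`. Powers with real exponents are `Real.rpow`. -/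
noncomputable def chi (β ε u : ℝ) : ℝ :=
  β * ∫ r in (0:ℝ)..u, ((r + ε ^ 2) ^ β - ε ^ (2 * β)) / r

/-- Concave increment lemma: for `0 < β < 1`, increments of `x ↦ x^β` shrink. -/
lemma rpow_increment_antitone {β : ℝ} (hβ0 : 0 < β) (hβ1 : β < 1)
    {r a b : ℝ} (hr : 0 ≤ r) (ha : 0 ≤ a) (hab : a ≤ b) :
    (r + b) ^ β - b ^ β ≤ (r + a) ^ β - a ^ β := by
  rcases eq_or_lt_of_le hr with hr0 | hr0
  · simp [← hr0]
  set f : ℝ → ℝ := fun x => (r + x) ^ β - x ^ β with hf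
  have hanti : AntitoneOn f (Icc a b) := by
    apply antitoneOn_of_deriv_nonpos (convex_Icc a b)
    · apply ContinuousOn.sub
      · exact ((continuous_const.add continuous_id).continuousOn).rpow_const
          (fun x _ => Or.inr hβ0.le)
      · exact continuousOn_id.rpow_const (fun x _ => Or.inr hβ0.le)
    · intro x hx
      rw [interior_Icc] at hx
      have hx0 : 0 < x := lt_of_le_of_lt ha hx.1
      have h1 : HasDerivAt f (β * (r + x) ^ (β - 1) - β * x ^ (β - 1)) x := by
        have d1 : HasDerivAt (fun x : ℝ => (r + x) ^ β) (β * (r + x) ^ (β - 1)) x := by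
          have := (Real.hasDerivAt_rpow_const (x := r + x) (p := β)
            (Or.inl (by positivity))).comp x ((hasDerivAt_id x).const_add r)
          simpa [mul_comm, Function.comp_def] using this
        have d2 : HasDerivAt (fun x : ℝ => x ^ β) (β * x ^ (β - 1)) x := by
          simpa using Real.hasDerivAt_rpow_const (x := x) (p := β) (Or.inl hx0.ne')
        exact d1.sub d2
      exact h1.differentiableAt.differentiableWithinAt
    · intro x hx
      rw [interior_Icc] at hx
      have hx0 : 0 < x := lt_of_le_of_lt ha hx.1
      have d1 : HasDerivAt (fun x : ℝ => (r + x) ^ β) (β * (r + x) ^ (β - 1)) x := by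
        have := (Real.hasDerivAt_rpow_const (x := r + x) (p := β)
          (Or.inl (by positivity))).comp x ((hasDerivAt_id x).const_add r)
        simpa [mul_comm, Function.comp_def] using this
      have d2 : HasDerivAt (fun x : ℝ => x ^ β) (β * x ^ (β - 1)) x := by
        simpa using Real.hasDerivAt_rpow_const (x := x) (p := β) (Or.inl hx0.ne')
      have h1 : HasDerivAt f (β * (r + x) ^ (β - 1) - β * x ^ (β - 1)) x := d1.sub d2
      rw [h1.deriv]
      have : (r + x) ^ (β - 1) ≤ x ^ (β - 1) :=
        Real.rpow_le_rpow_of_nonpos hx0 (by linarith) (by linarith)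
      nlinarith
  have := hanti (left_mem_Icc.2 hab) (right_mem_Icc.2 hab) hab
  simpa [hf] using this

lemma eps_pow_eq {β ε : ℝ} (hε : 0 ≤ ε) : ε ^ (2 * β) = (ε ^ 2) ^ β := by
  rw [show (2 : ℝ) * β = ((2 : ℕ) : ℝ) * β by norm_num, Real.rpow_mul hε,
    Real.rpow_natCast]

lemma integrand_nonneg {β ε r : ℝ} (hβ0 : 0 < β) (hε : 0 < ε) (hr : 0 ≤ r) :
    0 ≤ ((r + ε ^ 2) ^ β - ε ^ (2 * β)) / r := by
  apply div_nonneg _ hr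
  rw [eps_pow_eq hε.le, sub_nonneg]
  exact Real.rpow_le_rpow (by positivity) (by linarith) hβ0.le

lemma integrand_le_rpow {β ε r : ℝ} (hβ0 : 0 < β) (hβ1 : β < 1) (hε : 0 < ε) (hr : 0 ≤ r) :
    ((r + ε ^ 2) ^ β - ε ^ (2 * β)) / r ≤ r ^ (β - 1) := by
  rcases eq_or_lt_of_le hr with hr0 | hr0
  · rw [← hr0, div_zero, Real.zero_rpow (by linarith)]
  have key : (r + ε ^ 2) ^ β - (ε ^ 2) ^ β ≤ (r + 0) ^ β - (0 : ℝ) ^ β :=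
    rpow_increment_antitone hβ0 hβ1 hr le_rfl (by positivity)
  rw [add_zero, Real.zero_rpow hβ0.ne', sub_zero] at key
  rw [eps_pow_eq hε.le, div_le_iff₀ hr0]
  calc (r + ε ^ 2) ^ β - (ε ^ 2) ^ β ≤ r ^ β := key
    _ = r ^ (β - 1) * r := by
        rw [← Real.rpow_add_one hr0.ne' (β - 1)]
        norm_num

lemma integrand_anti {β ε₁ ε₂ r : ℝ} (hβ0 : 0 < β) (hβ1 : β < 1)
    (hε₁ : 0 < ε₁) (hε : ε₁ ≤ ε₂) (hr : 0 ≤ r) :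
    ((r + ε₂ ^ 2) ^ β - ε₂ ^ (2 * β)) / r ≤ ((r + ε₁ ^ 2) ^ β - ε₁ ^ (2 * β)) / r := by
  rcases eq_or_lt_of_le hr with hr0 | hr0
  · rw [← hr0, div_zero, div_zero]
  have key : (r + ε₂ ^ 2) ^ β - (ε₂ ^ 2) ^ β ≤ (r + ε₁ ^ 2) ^ β - (ε₁ ^ 2) ^ β :=
    rpow_increment_antitone hβ0 hβ1 hr (by positivity)
      (by nlinarith)
  rw [eps_pow_eq hε₁.le, eps_pow_eq (hε₁.trans_le hε).le]
  gcongr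

lemma integrand_integrable {β ε u : ℝ} (hβ0 : 0 < β) (hβ1 : β < 1) (hε : 0 < ε)
    (hu : 0 ≤ u) :
    IntervalIntegrable (fun r => ((r + ε ^ 2) ^ β - ε ^ (2 * β)) / r) volume 0 u := by
  have hg : IntervalIntegrable (fun r : ℝ => r ^ (β - 1)) volume 0 u :=
    intervalIntegral.intervalIntegrable_rpow' (by linarith)
  refine hg.mono_fun' ?_ ?_
  · apply Measurable.aestronglyMeasurable
    have hc : Continuous fun r : ℝ => (r + ε ^ 2) ^ β :=
      (continuous_id.add continuous_const).rpow_const (fun x => Or.inr hβ0.le)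
    exact ((hc.measurable.sub measurable_const).div measurable_id)
  · rw [Set.uIoc_of_le hu]
    filter_upwards [ae_restrict_mem measurableSet_Ioc] with x hx
    rw [Real.norm_eq_abs, abs_of_nonneg (integrand_nonneg hβ0 hε hx.1.le)]
    exact integrand_le_rpow hβ0 hβ1 hε hx.1.le


/-- For `0 < β < 1`, `0 < ε₁ ≤ ε₂`, and `u ≥ 0`, one has
`χ(u, ε₂²) ≤ χ(u, ε₁²) ≤ u^β`: the family `ε ↦ χ(·, ε²)` is monotone nondecreasing
as `ε` decreases. -/
theorem chi_antitone_in_eps_and_le_rpow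
    (β : ℝ) (hβ0 : 0 < β) (hβ1 : β < 1)
    (ε₁ ε₂ : ℝ) (hε₁ : 0 < ε₁) (hε : ε₁ ≤ ε₂) (u : ℝ) (hu : 0 ≤ u) :
    chi β ε₂ u ≤ chi β ε₁ u ∧ chi β ε₁ u ≤ u ^ β := by
  have hε₂ : 0 < ε₂ := hε₁.trans_le hε
  have hI1 := integrand_integrable (u := u) hβ0 hβ1 hε₁ hu
  have hI2 := integrand_integrable (u := u) hβ0 hβ1 hε₂ hu
  have hIg : IntervalIntegrable (fun r : ℝ => r ^ (β - 1)) volume 0 u :=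
    intervalIntegral.intervalIntegrable_rpow' (by linarith)
  unfold chi
  constructor
  · apply mul_le_mul_of_nonneg_left _ hβ0.le
    exact intervalIntegral.integral_mono_on hu hI2 hI1
      (fun x hx => integrand_anti hβ0 hβ1 hε₁ hε hx.1)
  · have h := intervalIntegral.integral_mono_on hu hI1 hIg
      (fun x hx => integrand_le_rpow hβ0 hβ1 hε₁ hx.1)
    have hg : (∫ r in (0:ℝ)..u, r ^ (β - 1)) = u ^ β / β := by
      rw [integral_rpow (Or.inl (by linarith))]
      rw [show β - 1 + 1 = β by ring, Real.zero_rpow hβ0.ne', sub_zero]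
    calc β * ∫ r in (0:ℝ)..u, ((r + ε₁ ^ 2) ^ β - ε₁ ^ (2 * β)) / r
        ≤ β * (u ^ β / β) := by
          rw [← hg]; exact mul_le_mul_of_nonneg_left h hβ0.le
      _ = u ^ β := by field_simp
end

section
/- For every real number β with 0 < β < 1 and every u ≥ 0, χ(u, ε²) := β ∫₀^u ((r + ε²)^β − ε^{2β})/r dr converges to u^β as ε → 0⁺. -/
open MeasureTheory Set Filter

/-- Subadditivity of `rpow` for exponents in `[0,1]`, real version. -/
lemma real_rpow_add_le_add_rpow (x y p : ℝ) (hx : 0 ≤ x) (hy : 0 ≤ y)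
    (hp : 0 ≤ p) (hp1 : p ≤ 1) : (x + y) ^ p ≤ x ^ p + y ^ p := by
  have h := NNReal.coe_le_coe.2
    (NNReal.rpow_add_le_add_rpow x.toNNReal y.toNNReal hp hp1)
  rw [← Real.toNNReal_add hx hy] at h
  simpa [NNReal.coe_rpow, Real.coe_toNNReal _ hx, Real.coe_toNNReal _ hy,
    Real.coe_toNNReal _ (add_nonneg hx hy)] using h

/-- For `0 < β < 1` and `u ≥ 0`, `χ(u, ε²)` converges to `u^β` as `ε → 0⁺`. -/
theorem chi_tendsto_rpow
    (β : ℝ) (hβ0 : 0 < β) (hβ1 : β < 1) (u : ℝ) (hu : 0 ≤ u) :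
    Tendsto (fun ε : ℝ => chi β ε u) (nhdsWithin 0 (Ioi 0)) (nhds (u ^ β)) := by
  have hβne : β ≠ 0 := ne_of_gt hβ0
  have key : Tendsto (fun ε : ℝ => ∫ r in (0:ℝ)..u, ((r + ε ^ 2) ^ β - ε ^ (2 * β)) / r)
      (nhdsWithin 0 (Ioi 0)) (nhds (∫ r in (0:ℝ)..u, r ^ (β - 1))) := by
    apply intervalIntegral.tendsto_integral_filter_of_dominated_convergence
        (bound := fun r => r ^ (β - 1))
    · filter_upwards with ε
      apply Measurable.aestronglyMeasurable
      have hc : Continuous fun r : ℝ => (r + ε ^ 2) ^ β :=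
        ((continuous_id.add continuous_const).rpow_const fun x => Or.inr hβ0.le)
      exact ((hc.measurable).sub measurable_const).div measurable_id
    · filter_upwards [self_mem_nhdsWithin] with ε hε
      have hε0 : (0:ℝ) < ε := hε
      refine ae_of_all _ fun r hr => ?_
      rw [uIoc_of_le hu] at hr
      have hr0 : 0 < r := hr.1
      have hε2 : ε ^ (2 * β) = (ε ^ 2) ^ β := by
        rw [← Real.rpow_natCast ε 2, ← Real.rpow_mul hε0.le]
        norm_num
      have h1 : (ε ^ 2 : ℝ) ^ β ≤ (r + ε ^ 2) ^ β :=
        Real.rpow_le_rpow (by positivity) (by linarith) hβ0.le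
      have h2 : (r + ε ^ 2) ^ β ≤ r ^ β + (ε ^ 2) ^ β :=
        real_rpow_add_le_add_rpow r (ε ^ 2) β hr0.le (by positivity) hβ0.le hβ1.le
      rw [Real.norm_eq_abs,
        abs_of_nonneg (div_nonneg (by rw [hε2]; linarith) hr0.le),
        Real.rpow_sub_one hr0.ne', hε2]
      gcongr
      linarith
    · exact intervalIntegral.intervalIntegrable_rpow' (by linarith)
    · refine ae_of_all _ fun r hr => ?_
      rw [uIoc_of_le hu] at hr
      have hr0 : 0 < r := hr.1
      have t1 : Tendsto (fun ε : ℝ => (r + ε ^ 2) ^ β) (nhdsWithin 0 (Ioi 0))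
          (nhds (r ^ β)) := by
        have hb : Tendsto (fun ε : ℝ => r + ε ^ 2) (nhds 0) (nhds r) := by
          have hcont : Continuous fun ε : ℝ => r + ε ^ 2 :=
            continuous_const.add (continuous_pow 2)
          simpa using hcont.tendsto (0:ℝ)
        exact (hb.rpow_const (Or.inl hr0.ne')).mono_left nhdsWithin_le_nhds
      have t2 : Tendsto (fun ε : ℝ => ε ^ (2 * β)) (nhdsWithin 0 (Ioi 0)) (nhds 0) := by
        have hc : ContinuousAt (fun x : ℝ => x ^ (2 * β)) 0 :=
          Real.continuousAt_rpow_const 0 (2 * β) (Or.inr (by positivity))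
        have h0 : (0:ℝ) ^ (2 * β) = 0 := Real.zero_rpow (by positivity)
        simpa [h0] using hc.tendsto.mono_left nhdsWithin_le_nhds
      have := (t1.sub t2).div_const r
      rw [sub_zero, ← Real.rpow_sub_one hr0.ne'] at this
      exact this
  have hint : (∫ r in (0:ℝ)..u, r ^ (β - 1)) = u ^ β / β := by
    rw [integral_rpow (Or.inl (by linarith))]
    have hb : β - 1 + 1 = β := by ring
    rw [hb, Real.zero_rpow hβne, sub_zero]
  have := key.const_mul β
  rw [hint, mul_div_cancel₀ _ hβne] at this
  exact this
end

section
/- For every real number β with 0 < β < 1 and every M > 0, the functions u ↦ χ(u, ε²) := β ∫₀^u ((r + ε²)^β − ε^{2β})/r dr converge uniformly on the interval [0, M] to u ↦ u^β as ε → 0⁺; that is, sup_{u ∈ [0,M]} (u^β − χ(u, ε²)) → 0 as ε → 0⁺. -/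
open MeasureTheory Set Filter

/-- Subadditivity of `rpow` with exponent in `[0,1]` on nonnegative reals. -/
lemma real_rpow_add_le {β a b : ℝ} (hβ0 : 0 ≤ β) (hβ1 : β ≤ 1)
    (ha : 0 ≤ a) (hb : 0 ≤ b) : (a + b) ^ β ≤ a ^ β + b ^ β := by
  have h := NNReal.rpow_add_le_add_rpow a.toNNReal b.toNNReal hβ0 hβ1
  rw [← Real.toNNReal_add ha hb] at h
  have h' := NNReal.coe_le_coe.2 h
  simpa [NNReal.coe_rpow, Real.coe_toNNReal _ ha, Real.coe_toNNReal _ hb,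
    Real.coe_toNNReal _ (add_nonneg ha hb)] using h'

/-- The key quantitative bound: for `0 < ε` with `ε² ≤ M` and `u ∈ [0, M]`,
`0 ≤ u^β − χ(u, ε²) ≤ (ε²)^β + β·(ε²)^β·(log M − log ε²)`. -/
lemma chi_key_bound (β : ℝ) (hβ0 : 0 < β) (hβ1 : β < 1) (M : ℝ) (hM : 0 < M)
    (ε : ℝ) (hε : 0 < ε) (hεM : ε ^ 2 ≤ M) {u : ℝ} (hu : u ∈ Icc 0 M) :
    u ^ β - chi β ε u ∈
      Icc 0 ((ε ^ 2) ^ β + β * ((ε ^ 2) ^ β * (Real.log M - Real.log (ε ^ 2)))) := by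
  set e : ℝ := ε ^ 2 with he_def
  have he : 0 < e := by positivity
  set g : ℝ → ℝ := fun r => ((r + e) ^ β - e ^ β) / r with hg_def
  set h : ℝ → ℝ := fun r => r ^ (β - 1) - g r with hh_def
  -- rewrite chi
  have hpow : ε ^ (2 * β) = e ^ β := by
    rw [he_def, ← Real.rpow_natCast ε 2, ← Real.rpow_mul hε.le]
    norm_num
  have hchi : chi β ε u = β * ∫ r in (0:ℝ)..u, g r := by
    unfold chi; rw [hpow]
  -- pointwise bounds
  have hg_nonneg : ∀ r : ℝ, 0 ≤ r → 0 ≤ g r := by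
    intro r hr
    apply div_nonneg _ hr
    have : e ^ β ≤ (r + e) ^ β :=
      Real.rpow_le_rpow he.le (by linarith) hβ0.le
    linarith
  have hg_le : ∀ r : ℝ, 0 < r → g r ≤ r ^ (β - 1) := by
    intro r hr
    have hsub : (r + e) ^ β ≤ r ^ β + e ^ β :=
      real_rpow_add_le hβ0.le hβ1.le hr.le he.le
    rw [Real.rpow_sub hr, Real.rpow_one]
    simp only [hg_def]
    gcongr
    linarith

  have hh_nonneg : ∀ r ∈ Icc (0:ℝ) M, 0 ≤ h r := by
    intro r hr
    rcases eq_or_lt_of_le hr.1 with rfl | hrpos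
    · simp [hh_def, hg_def, Real.zero_rpow (by linarith : β - 1 ≠ 0)]
    · exact sub_nonneg.2 (hg_le r hrpos)
  have hh_le_rpow : ∀ r ∈ Icc (0:ℝ) M, h r ≤ r ^ (β - 1) := by
    intro r hr
    rcases eq_or_lt_of_le hr.1 with rfl | hrpos
    · simp [hh_def, hg_def]
    · have := hg_nonneg r hrpos.le
      simp only [hh_def]; linarith
  have hh_le_div : ∀ r ∈ Icc e M, h r ≤ e ^ β * (1 / r) := by
    intro r hr
    have hrpos : 0 < r := lt_of_lt_of_le he hr.1
    have hmono : r ^ β ≤ (r + e) ^ β :=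
      Real.rpow_le_rpow hrpos.le (by linarith) hβ0.le
    have hrp : r ^ (β - 1) = r ^ β / r := by
      rw [Real.rpow_sub hrpos, Real.rpow_one]
    simp only [hh_def, hg_def, hrp]
    rw [div_sub_div_same, mul_one_div, div_le_div_iff_of_pos_right hrpos]
    linarith
  -- integrability
  have hrint : ∀ a b : ℝ, IntervalIntegrable (fun r : ℝ => r ^ (β - 1)) volume a b :=
    fun a b => intervalIntegral.intervalIntegrable_rpow' (by linarith)
  have hg_meas : Measurable g := by
    apply Measurable.div _ measurable_id
    exact (((Real.continuous_rpow_const hβ0.le).comp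
      (continuous_id.add continuous_const)).sub continuous_const).measurable
  have hgint : ∀ b : ℝ, 0 ≤ b → IntervalIntegrable g volume 0 b := by
    intro b hb
    apply (hrint 0 b).mono_fun hg_meas.aestronglyMeasurable.restrict
    rw [uIoc_of_le hb]
    filter_upwards [ae_restrict_mem measurableSet_Ioc] with r hr
    rw [Real.norm_eq_abs, Real.norm_eq_abs, abs_of_nonneg (hg_nonneg r hr.1.le),
      abs_of_nonneg (Real.rpow_nonneg hr.1.le _)]
    exact hg_le r hr.1
  have hhint : ∀ b : ℝ, 0 ≤ b → IntervalIntegrable h volume 0 b :=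
    fun b hb => (hrint 0 b).sub (hgint b hb)
  -- identity for u^β
  have hbne : β ≠ 0 := hβ0.ne'
  have hid : ∀ v : ℝ, 0 ≤ v → v ^ β = β * ∫ r in (0:ℝ)..v, r ^ (β - 1) := by
    intro v hv
    rw [integral_rpow (Or.inl (by linarith))]
    rw [sub_add_cancel, Real.zero_rpow hbne, sub_zero]
    field_simp
  have hD : u ^ β - chi β ε u = β * ∫ r in (0:ℝ)..u, h r := by
    rw [hchi, hid u hu.1, hh_def,
      intervalIntegral.integral_sub (hrint 0 u) (hgint u hu.1)]
    ring
  constructor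
  · rw [hD]
    exact mul_nonneg hβ0.le (intervalIntegral.integral_nonneg hu.1
      (fun r hr => hh_nonneg r ⟨hr.1, hr.2.trans hu.2⟩))
  · -- first: ∫₀ᵘ h ≤ ∫₀ᴹ h
    have hmono : (∫ r in (0:ℝ)..u, h r) ≤ ∫ r in (0:ℝ)..M, h r := by
      apply intervalIntegral.integral_mono_interval le_rfl hu.1 hu.2
      · filter_upwards [ae_restrict_mem measurableSet_Ioc] with r hr
        exact hh_nonneg r ⟨hr.1.le, hr.2⟩
      · exact hhint M hM.le
    -- split at e
    have hint1 : IntervalIntegrable h volume 0 e := hhint e he.le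
    have hint2 : IntervalIntegrable h volume e M := by
      apply (hhint M hM.le).mono_set
      rw [uIcc_of_le hεM, uIcc_of_le hM.le]
      exact Icc_subset_Icc he.le le_rfl
    have hsplit : (∫ r in (0:ℝ)..M, h r) =
        (∫ r in (0:ℝ)..e, h r) + ∫ r in e..M, h r :=
      (intervalIntegral.integral_add_adjacent_intervals hint1 hint2).symm
    -- bound on [0, e]
    have hb1 : (∫ r in (0:ℝ)..e, h r) ≤ e ^ β / β := by
      have h1 : (∫ r in (0:ℝ)..e, h r) ≤ ∫ r in (0:ℝ)..e, r ^ (β - 1) :=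
        intervalIntegral.integral_mono_on he.le hint1 (hrint 0 e)
          (fun r hr => hh_le_rpow r ⟨hr.1, hr.2.trans hεM⟩)
      have h2 : (∫ r in (0:ℝ)..e, r ^ (β - 1)) = e ^ β / β := by
        rw [integral_rpow (Or.inl (by linarith)), sub_add_cancel,
          Real.zero_rpow hbne, sub_zero]
      linarith
    -- bound on [e, M]
    have hcont : ContinuousOn (fun r : ℝ => e ^ β * (1 / r)) (uIcc e M) := by
      rw [uIcc_of_le hεM]
      apply continuousOn_const.mul
      apply continuousOn_const.div continuousOn_id
      intro x hx
      exact (lt_of_lt_of_le he hx.1).ne'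
    have hb2 : (∫ r in e..M, h r) ≤ e ^ β * (Real.log M - Real.log e) := by
      have h1 : (∫ r in e..M, h r) ≤ ∫ r in e..M, e ^ β * (1 / r) :=
        intervalIntegral.integral_mono_on hεM hint2 hcont.intervalIntegrable
          hh_le_div
      have h2 : (∫ r in e..M, e ^ β * (1 / r)) = e ^ β * (Real.log M - Real.log e) := by
        rw [intervalIntegral.integral_const_mul, integral_one_div, Real.log_div hM.ne' he.ne']
        rw [uIcc_of_le hεM]
        exact fun hc => absurd hc.1 (not_le.2 he)
      linarith
    rw [hD]
    have : (∫ r in (0:ℝ)..u, h r) ≤ e ^ β / β + e ^ β * (Real.log M - Real.log e) := by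
      linarith
    calc β * ∫ r in (0:ℝ)..u, h r
        ≤ β * (e ^ β / β + e ^ β * (Real.log M - Real.log e)) := by
          exact mul_le_mul_of_nonneg_left this hβ0.le
      _ = e ^ β + β * (e ^ β * (Real.log M - Real.log e)) := by field_simp

/-- For `0 < β < 1` and `M > 0`, the functions `u ↦ χ(u, ε²)` converge uniformly on
`[0, M]` to `u ↦ u^β` as `ε → 0⁺`. -/
theorem chi_tendstoUniformlyOn_rpow
    (β : ℝ) (hβ0 : 0 < β) (hβ1 : β < 1) (M : ℝ) (hM : 0 < M) :
    TendstoUniformlyOn (fun (ε : ℝ) (u : ℝ) => chi β ε u) (fun u : ℝ => u ^ β)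
      (nhdsWithin 0 (Ioi 0)) (Icc 0 M) := by
  rw [Metric.tendstoUniformlyOn_iff]
  intro δ hδ
  -- the bound function tends to 0
  have hsq : Tendsto (fun ε : ℝ => ε ^ 2) (nhdsWithin 0 (Ioi 0)) (nhdsWithin 0 (Ioi 0)) := by
    apply tendsto_nhdsWithin_of_tendsto_nhds_of_eventually_within
    · exact ((continuous_pow 2).tendsto' 0 0 (by norm_num)).mono_left nhdsWithin_le_nhds
    · filter_upwards [self_mem_nhdsWithin] with x hx
      exact pow_pos (mem_Ioi.mp hx) 2
  have h1 : Tendsto (fun t : ℝ => t ^ β) (nhdsWithin 0 (Ioi 0)) (nhds 0) := by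
    have := (Real.continuousAt_rpow_const 0 β (Or.inr hβ0.le)).tendsto
    rw [Real.zero_rpow hβ0.ne'] at this
    exact this.mono_left nhdsWithin_le_nhds
  have h2 : Tendsto (fun t : ℝ => Real.log t * t ^ β) (nhdsWithin 0 (Ioi 0)) (nhds 0) :=
    tendsto_log_mul_rpow_nhdsGT_zero hβ0
  have hφ : Tendsto (fun t : ℝ => t ^ β + β * (t ^ β * (Real.log M - Real.log t)))
      (nhdsWithin 0 (Ioi 0)) (nhds 0) := by
    have hcomb : Tendsto
        (fun t : ℝ => (1 + β * Real.log M) * t ^ β - β * (Real.log t * t ^ β))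
        (nhdsWithin 0 (Ioi 0)) (nhds 0) := by
      have := (h1.const_mul (1 + β * Real.log M)).sub (h2.const_mul β)
      simpa using this
    exact hcomb.congr (fun t => by ring)
  have hB : Tendsto (fun ε : ℝ =>
      (ε ^ 2) ^ β + β * ((ε ^ 2) ^ β * (Real.log M - Real.log (ε ^ 2))))
      (nhdsWithin 0 (Ioi 0)) (nhds 0) := hφ.comp hsq
  have hev1 : ∀ᶠ ε in nhdsWithin (0:ℝ) (Ioi 0),
      (ε ^ 2) ^ β + β * ((ε ^ 2) ^ β * (Real.log M - Real.log (ε ^ 2))) < δ :=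
    hB.eventually (gt_mem_nhds hδ)
  have hev2 : ∀ᶠ ε in nhdsWithin (0:ℝ) (Ioi 0), ε ^ 2 ≤ M := by
    have := (hsq.mono_right nhdsWithin_le_nhds).eventually (gt_mem_nhds hM)
    filter_upwards [this] with ε hε using hε.le
  filter_upwards [hev1, hev2, self_mem_nhdsWithin] with ε h1' h2' h3'
  intro u hu
  have key := chi_key_bound β hβ0 hβ1 M hM ε h3' h2' hu
  rw [Real.dist_eq, abs_of_nonneg key.1]
  exact lt_of_le_of_lt key.2 h1'
end
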